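/- arXiv:1404.2618 — 4 statements merged into one kernel-verified Lean document; each statement's English description precedes it below -/
import Mathlib

section
/- In the sylvester monoid S (presented over the ordered alphabet {1 < 2 < 3 < ...} by relations cavb = acvb for all letters a ≤ b < c and all words v), any two words with the same content represent ∼p*-conjugate elements. -/
/-- The defining relations of the sylvester monoid over the alphabet ℕ
(order-isomorphic to {1 < 2 < 3 < ⋯}): `(cavb, acvb)` for `a ≤ b < c`. -/
def SylvesterRel : FreeMonoid ℕ → FreeMonoid ℕ → Prop := fun u v =>
  ∃ (a b c : ℕ) (w : FreeMonoid ℕ), a ≤ b ∧ b < c ∧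
    u = FreeMonoid.of c * FreeMonoid.of a * w * FreeMonoid.of b ∧
    v = FreeMonoid.of a * FreeMonoid.of c * w * FreeMonoid.of b

namespace SylAux

abbrev C : Con (FreeMonoid ℕ) := conGen SylvesterRel

/-- The class of a list of letters in the sylvester monoid. -/
def mkl (l : List ℕ) : C.Quotient := C.mk' (FreeMonoid.ofList l)

/-- The primary conjugacy relation on the sylvester monoid. -/
def Rel (x y : C.Quotient) : Prop := ∃ u v, x = u * v ∧ y = v * u

abbrev RT : C.Quotient → C.Quotient → Prop := Relation.TransGen Rel

theorem mkl_append (l₁ l₂ : List ℕ) : mkl (l₁ ++ l₂) = mkl l₁ * mkl l₂ := by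
  unfold mkl
  rw [show FreeMonoid.ofList (l₁ ++ l₂) = FreeMonoid.ofList l₁ * FreeMonoid.ofList l₂ from rfl,
    map_mul]

theorem rt_refl (x : C.Quotient) : RT x x :=
  Relation.TransGen.single ⟨x, 1, (mul_one x).symm, (one_mul x).symm⟩

theorem rt_of_eq {x y : C.Quotient} (h : x = y) : RT x y := h ▸ rt_refl x

theorem rel_symm {x y : C.Quotient} (h : Rel x y) : Rel y x := by
  obtain ⟨u, v, h1, h2⟩ := h; exact ⟨v, u, h2, h1⟩

theorem rt_symm {x y : C.Quotient} (h : RT x y) : RT y x := by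
  induction h with
  | single h => exact Relation.TransGen.single (rel_symm h)
  | tail _ h ih => exact (Relation.TransGen.single (rel_symm h)).trans ih

/-- Rotation (cyclic shift) is a single conjugacy step. -/
theorem rot (u v : List ℕ) : RT (mkl (u ++ v)) (mkl (v ++ u)) :=
  Relation.TransGen.single ⟨mkl u, mkl v, mkl_append u v, mkl_append v u⟩

/-- A single sylvester relation applied in context. -/
theorem con_swap (L V R : List ℕ) (a b c : ℕ) (h1 : a ≤ b) (h2 : b < c) :
    mkl (L ++ a :: c :: (V ++ b :: R)) = mkl (L ++ c :: a :: (V ++ b :: R)) := by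
  apply C.eq.mpr
  have base : SylvesterRel (FreeMonoid.ofList (c :: a :: (V ++ [b])))
      (FreeMonoid.ofList (a :: c :: (V ++ [b]))) :=
    ⟨a, b, c, FreeMonoid.ofList V, h1, h2, rfl, rfl⟩
  have hC : C (FreeMonoid.ofList (a :: c :: (V ++ [b])))
      (FreeMonoid.ofList (c :: a :: (V ++ [b]))) :=
    (ConGen.Rel.of _ _ base).symm
  have hm := C.mul (C.mul (C.refl (FreeMonoid.ofList L)) hC) (C.refl (FreeMonoid.ofList R))
  have e1 : L ++ a :: c :: (V ++ b :: R) = (L ++ (a :: c :: (V ++ [b]))) ++ R := by simp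
  have e2 : L ++ c :: a :: (V ++ b :: R) = (L ++ (c :: a :: (V ++ [b]))) ++ R := by simp
  rw [show FreeMonoid.ofList (L ++ a :: c :: (V ++ b :: R)) =
      FreeMonoid.ofList ((L ++ (a :: c :: (V ++ [b]))) ++ R) from by rw [e1],
    show FreeMonoid.ofList (L ++ c :: a :: (V ++ b :: R)) =
      FreeMonoid.ofList ((L ++ (c :: a :: (V ++ [b]))) ++ R) from by rw [e2]]
  exact hm

theorem mkl_congr {l l' : List ℕ} (h : l = l') : mkl l = mkl l' := by rw [h]

/-- One small letter `a` migrates right across a block `T` of letters `> d`,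
using the later letter `d` as witness. Pure congruence. -/
theorem mig1 (d a : ℕ) (ha : a ≤ d) :
    ∀ (T : List ℕ), (∀ x ∈ T, d < x) → ∀ (V R : List ℕ),
      mkl (a :: (T ++ V ++ d :: R)) = mkl (T ++ a :: (V ++ d :: R)) := by
  intro T
  induction T with
  | nil => intro _ V R; rfl
  | cons c T' ih =>
    intro hT V R
    have hdc : d < c := hT c (by simp)
    have step := con_swap [] (T' ++ V) R a d c ha hdc
    calc mkl (a :: (c :: T' ++ V ++ d :: R))
        = mkl ([] ++ a :: c :: ((T' ++ V) ++ d :: R)) := mkl_congr (by simp)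
      _ = mkl ([] ++ c :: a :: ((T' ++ V) ++ d :: R)) := step
      _ = mkl ([c] ++ (a :: (T' ++ V ++ d :: R))) := mkl_congr (by simp)
      _ = mkl [c] * mkl (a :: (T' ++ V ++ d :: R)) := mkl_append _ _
      _ = mkl [c] * mkl (T' ++ a :: (V ++ d :: R)) := by
            rw [ih (fun x hx => hT x (by simp [hx])) V R]
      _ = mkl ([c] ++ (T' ++ a :: (V ++ d :: R))) := (mkl_append _ _).symm
      _ = mkl ((c :: T') ++ a :: (V ++ d :: R)) := mkl_congr (by simp)

/-- A whole block `s` of letters `≤ d` migrates right across a block `T` of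
letters `> d`, using the later letter `d` as witness. Pure congruence. -/
theorem mig (d : ℕ) :
    ∀ (s : List ℕ), (∀ x ∈ s, x ≤ d) → ∀ (T : List ℕ), (∀ x ∈ T, d < x) → ∀ (V R : List ℕ),
      mkl (s ++ T ++ V ++ d :: R) = mkl (T ++ s ++ V ++ d :: R) := by
  intro s
  induction s using List.reverseRecOn with
  | nil => intro _ T _ V R; exact mkl_congr (by simp)
  | append_singleton s₀ a ih =>
    intro hs T hT V R
    have ha : a ≤ d := hs a (by simp)
    calc mkl ((s₀ ++ [a]) ++ T ++ V ++ d :: R)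
        = mkl (s₀ ++ (a :: (T ++ V ++ d :: R))) := mkl_congr (by simp)
      _ = mkl s₀ * mkl (a :: (T ++ V ++ d :: R)) := mkl_append _ _
      _ = mkl s₀ * mkl (T ++ a :: (V ++ d :: R)) := by rw [mig1 d a ha T hT V R]
      _ = mkl (s₀ ++ (T ++ a :: (V ++ d :: R))) := (mkl_append _ _).symm
      _ = mkl (s₀ ++ T ++ (a :: V) ++ d :: R) := mkl_congr (by simp)
      _ = mkl (T ++ s₀ ++ (a :: V) ++ d :: R) := ih (fun x hx => hs x (by simp [hx])) T hT _ _
      _ = mkl (T ++ (s₀ ++ [a]) ++ V ++ d :: R) := mkl_congr (by simp)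

/-- An adjacent inversion `(c, d)` may be swapped provided a witness letter
`b` with `d ≤ b < c` exists anywhere else in the word. -/
theorem lemE (A B : List ℕ) (c d b : ℕ) (hb : b ∈ A ++ B) (h1 : d ≤ b) (h2 : b < c) :
    RT (mkl (A ++ c :: d :: B)) (mkl (A ++ d :: c :: B)) := by
  rcases List.mem_append.mp hb with hA | hB
  · -- witness in A : rotate so that A is at the back
    obtain ⟨A₁, A₂, rfl⟩ := List.append_of_mem hA
    have r1 : RT (mkl ((A₁ ++ b :: A₂) ++ c :: d :: B))
        (mkl ((c :: d :: B) ++ (A₁ ++ b :: A₂))) := rot _ _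
    have sw : mkl ([] ++ d :: c :: ((B ++ A₁) ++ b :: A₂))
        = mkl ([] ++ c :: d :: ((B ++ A₁) ++ b :: A₂)) := con_swap [] (B ++ A₁) A₂ d b c h1 h2
    have r2 : RT (mkl ((d :: c :: B) ++ (A₁ ++ b :: A₂)))
        (mkl ((A₁ ++ b :: A₂) ++ d :: c :: B)) := rot _ _
    refine (r1.trans (rt_of_eq ?_)).trans r2
    calc mkl ((c :: d :: B) ++ (A₁ ++ b :: A₂))
        = mkl ([] ++ c :: d :: ((B ++ A₁) ++ b :: A₂)) := mkl_congr (by simp)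
      _ = mkl ([] ++ d :: c :: ((B ++ A₁) ++ b :: A₂)) := sw.symm
      _ = mkl ((d :: c :: B) ++ (A₁ ++ b :: A₂)) := mkl_congr (by simp)
  · -- witness in B : apply the relation in place
    obtain ⟨B₁, B₂, rfl⟩ := List.append_of_mem hB
    apply rt_of_eq
    calc mkl (A ++ c :: d :: (B₁ ++ b :: B₂))
        = mkl (A ++ c :: d :: (B₁ ++ b :: B₂)) := rfl
      _ = mkl (A ++ d :: c :: (B₁ ++ b :: B₂)) := (con_swap A B₁ B₂ d b c h1 h2).symm

/-- Extraction lemma: a letter `d` that is `≤` all letters of `P` (with a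
prefix `s` of letters `≤ d`) can be brought directly after `s`, at the cost of
rearranging the remaining letters. -/
theorem lemF (d : ℕ) :
    ∀ (P : List ℕ), (∀ x ∈ P, d ≤ x) → ∀ (s : List ℕ), (∀ x ∈ s, x ≤ d) → ∀ (Qw : List ℕ),
      ∃ R : List ℕ, R.Perm (P ++ Qw) ∧ RT (mkl (s ++ P ++ d :: Qw)) (mkl (s ++ d :: R)) := by
  intro P
  induction P using List.reverseRecOn with
  | nil =>
    intro _ s _ Qw
    exact ⟨Qw, List.Perm.refl _, rt_of_eq (mkl_congr (by simp))⟩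
  | append_singleton P₀ c ih =>
    intro hP s hs Qw
    have hc : d ≤ c := hP c (by simp)
    have hP₀ : ∀ x ∈ P₀, d ≤ x := fun x hx => hP x (by simp [hx])
    rcases eq_or_lt_of_le hc with rfl | hdc
    · -- c = d : just re-associate and recurse
      obtain ⟨R, hperm, hrt⟩ := ih hP₀ s hs (d :: Qw)
      refine ⟨R, ?_, ?_⟩
      · exact hperm.trans (List.Perm.of_eq (by simp))
      · exact (rt_of_eq (mkl_congr (by simp))).trans hrt
    · by_cases hw : ∃ b ∈ (s ++ P₀) ++ Qw, d ≤ b ∧ b < c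
      · -- a witness exists : swap the pair (c, d), then recurse
        obtain ⟨b, hb, hb1, hb2⟩ := hw
        have e := lemE (s ++ P₀) Qw c d b hb hb1 hb2
        obtain ⟨R, hperm, hrt⟩ := ih hP₀ s hs (c :: Qw)
        refine ⟨R, ?_, ?_⟩
        · exact hperm.trans (List.Perm.of_eq (by simp))
        · refine ((rt_of_eq (mkl_congr (by simp))).trans e).trans ?_
          exact (rt_of_eq (mkl_congr (by simp))).trans hrt
      · -- stuck case : migrate `s` across, then rotate
        push_neg at hw
        have hT : ∀ x ∈ P₀ ++ [c], d < x := by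
          intro x hx
          rcases List.mem_append.mp hx with hx | hx
          · have h1 : d ≤ x := hP₀ x hx
            have h2 : ¬ x < c := fun hlt => absurd (hw x (by simp [hx]) h1) (not_le.mpr hlt)
            exact lt_of_lt_of_le hdc (not_lt.mp h2)
          · simp at hx; omega
        have hmig := mig d s hs (P₀ ++ [c]) hT [] Qw
        have hrot : RT (mkl ((P₀ ++ [c]) ++ (s ++ d :: Qw)))
            (mkl ((s ++ d :: Qw) ++ (P₀ ++ [c]))) := rot _ _
        refine ⟨Qw ++ (P₀ ++ [c]), List.perm_append_comm, ?_⟩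
        refine (rt_of_eq ?_).trans (hrot.trans (rt_of_eq (mkl_congr (by simp))))
        calc mkl (s ++ (P₀ ++ [c]) ++ d :: Qw)
            = mkl (s ++ (P₀ ++ [c]) ++ [] ++ d :: Qw) := mkl_congr (by simp)
          _ = mkl ((P₀ ++ [c]) ++ s ++ [] ++ d :: Qw) := hmig
          _ = mkl ((P₀ ++ [c]) ++ (s ++ d :: Qw)) := mkl_congr (by simp)

/-- Sorting lemma: any word `z` whose letters all dominate the letters of the
prefix `s` is conjugate (rel. `s`) to any sorted rearrangement of itself. -/
theorem lemG : ∀ (n : ℕ) (z : List ℕ), z.length ≤ n → ∀ (s z' : List ℕ),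
    (∀ a ∈ s, ∀ b ∈ z, a ≤ b) → z.Perm z' → z'.Pairwise (· ≤ ·) →
    RT (mkl (s ++ z)) (mkl (s ++ z')) := by
  intro n
  induction n with
  | zero =>
    intro z hz s z' _ hperm _
    have hz0 : z = [] := List.length_eq_zero_iff.mp (Nat.le_zero.mp hz)
    subst hz0
    have : z' = [] := hperm.symm.eq_nil
    subst this
    exact rt_refl _
  | succ n ih =>
    intro z hz s z' hs hperm hsort
    cases z' with
    | nil =>
      have : z = [] := hperm.eq_nil
      subst this
      exact rt_refl _
    | cons dd z'' =>
      obtain ⟨hd_le, hsort''⟩ := List.pairwise_cons.mp hsort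
      have hz_ge : ∀ x ∈ z, dd ≤ x := by
        intro x hx
        rcases List.mem_cons.mp (hperm.mem_iff.mp hx) with rfl | hx'
        · exact le_refl x
        · exact hd_le x hx'
      have hd_mem : dd ∈ z := hperm.mem_iff.mpr (by simp)
      obtain ⟨P, Qw, rfl⟩ := List.append_of_mem hd_mem
      have hP : ∀ x ∈ P, dd ≤ x := fun x hx => hz_ge x (by simp [hx])
      have hs' : ∀ x ∈ s, x ≤ dd := fun x hx => hs x hx dd hd_mem
      obtain ⟨R, hRperm, hRT⟩ := lemF dd P hP s hs' Qw
      have hRz'' : R.Perm z'' := by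
        have h1 : (P ++ dd :: Qw).Perm (dd :: (P ++ Qw)) := List.perm_middle
        have h2 : (dd :: (P ++ Qw)).Perm (dd :: z'') := h1.symm.trans hperm
        exact hRperm.trans h2.cons_inv
      have hlen : R.length ≤ n := by
        have hl1 := hRperm.length_eq
        simp only [List.length_append, List.length_cons] at hl1 hz
        omega
      have hs'' : ∀ a ∈ s ++ [dd], ∀ b ∈ R, a ≤ b := by
        intro a ha b hb
        have hbz : b ∈ P ++ dd :: Qw := by
          have : b ∈ P ++ Qw := (hRperm.mem_iff).mp hb
          rcases List.mem_append.mp this with h | h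
          · exact List.mem_append.mpr (Or.inl h)
          · exact List.mem_append.mpr (Or.inr (by simp [h]))
        rcases List.mem_append.mp ha with h | h
        · exact hs a h b hbz
        · simp at h; subst h; exact hz_ge b hbz
      have hrec := ih R hlen (s ++ [dd]) z'' hs'' hRz'' hsort''
      refine ((rt_of_eq (mkl_congr ?_)).trans hRT).trans ?_
      · simp
      refine (rt_of_eq (mkl_congr ?_)).trans (hrec.trans (rt_of_eq (mkl_congr ?_))) <;> simp

end SylAux

theorem sylvester_same_content_pstar (w w' : FreeMonoid ℕ)
    (hc : ∀ a : ℕ, w.toList.count a = w'.toList.count a) :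
    Relation.TransGen
      (fun x y : (conGen SylvesterRel).Quotient => ∃ u v, x = u * v ∧ y = v * u)
      ((conGen SylvesterRel).mk' w) ((conGen SylvesterRel).mk' w') := by
  have hperm : w.toList.Perm w'.toList := List.perm_iff_count.mpr hc
  set z' : List ℕ := List.insertionSort (· ≤ ·) w.toList with hz'
  have hsort : z'.Pairwise (· ≤ ·) := List.pairwise_insertionSort _ _
  have hp1 : w.toList.Perm z' := (List.perm_insertionSort _ _).symm
  have hp2 : w'.toList.Perm z' := hperm.symm.trans hp1
  have h1 : SylAux.RT (SylAux.mkl ([] ++ w.toList)) (SylAux.mkl ([] ++ z')) :=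
    SylAux.lemG w.toList.length w.toList le_rfl [] z' (by simp) hp1 hsort
  have h2 : SylAux.RT (SylAux.mkl ([] ++ w'.toList)) (SylAux.mkl ([] ++ z')) :=
    SylAux.lemG w'.toList.length w'.toList le_rfl [] z' (by simp) hp2 hsort
  have hfin : SylAux.RT (SylAux.mkl w.toList) (SylAux.mkl w'.toList) := by
    refine ((h1.trans (SylAux.rt_symm h2)))
  have e1 : SylAux.mkl w.toList = (conGen SylvesterRel).mk' w := by
    unfold SylAux.mkl; rw [FreeMonoid.ofList_toList]
  have e2 : SylAux.mkl w'.toList = (conGen SylvesterRel).mk' w' := by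
    unfold SylAux.mkl; rw [FreeMonoid.ofList_toList]
  rw [e1, e2] at hfin
  exact hfin
end

section
/- In the sylvester monoid S, two elements are o-conjugate if and only if they have the same content; moreover, the relations ∼o and ∼p* coincide on S. -/
namespace SylvAux

abbrev Q := (conGen SylvesterRel).Quotient

noncomputable def pl (l : List ℕ) : FreeMonoid ℕ := FreeMonoid.ofList l

noncomputable def pi (l : List ℕ) : Q := (conGen SylvesterRel).mk' (pl l)

lemma pl_append (a b : List ℕ) : pl (a ++ b) = pl a * pl b := rfl

lemma pi_append (a b : List ℕ) : pi (a ++ b) = pi a * pi b := by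
  unfold pi; rw [pl_append, map_mul]

/-- p-conjugacy -/
def PC (x y : Q) : Prop := ∃ u v, x = u * v ∧ y = v * u

def Rel (x y : Q) : Prop := Relation.TransGen PC x y

lemma PC.refl (x : Q) : PC x x := ⟨x, 1, by simp, by simp⟩

lemma Rel.refl (x : Q) : Rel x x := Relation.TransGen.single (PC.refl x)

lemma Rel.of_eq {x y : Q} (h : x = y) : Rel x y := h ▸ Rel.refl x

lemma Rel.trans {x y z : Q} (h : Rel x y) (h' : Rel y z) : Rel x z :=
  Relation.TransGen.trans h h'

lemma PC.symm {x y : Q} (h : PC x y) : PC y x := by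
  obtain ⟨u, v, h1, h2⟩ := h; exact ⟨v, u, h2, h1⟩

lemma Rel.symm {x y : Q} (h : Rel x y) : Rel y x := by
  induction h with
  | single h => exact Relation.TransGen.single h.symm
  | tail _ h ih => exact Relation.TransGen.head h.symm ih

lemma rel_rot (a b : List ℕ) : Rel (pi (a ++ b)) (pi (b ++ a)) :=
  Relation.TransGen.single ⟨pi a, pi b, (pi_append a b), (pi_append b a).symm⟩

lemma base_rel (a b c : ℕ) (hab : a ≤ b) (hbc : b < c) (v : List ℕ) :
    SylvesterRel (pl ([c, a] ++ v ++ [b])) (pl ([a, c] ++ v ++ [b])) := by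
  refine ⟨a, b, c, pl v, hab, hbc, ?_, ?_⟩ <;>
  · apply FreeMonoid.toList.injective
    simp [pl, FreeMonoid.toList_mul]

/-- central equality: swap (c,x) → (x,c) with a witness b to the right. -/
lemma swap_eq (a b c : ℕ) (hab : a ≤ b) (hbc : b < c) (p v s : List ℕ) :
    pi (p ++ [c, a] ++ v ++ [b] ++ s) = pi (p ++ [a, c] ++ v ++ [b] ++ s) := by
  have h1 : (conGen SylvesterRel) (pl ([c, a] ++ v ++ [b])) (pl ([a, c] ++ v ++ [b])) :=
    ConGen.Rel.of _ _ (base_rel a b c hab hbc v)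
  have h2 : (conGen SylvesterRel)
      (pl p * (pl ([c, a] ++ v ++ [b]) * pl s)) (pl p * (pl ([a, c] ++ v ++ [b]) * pl s)) :=
    (conGen SylvesterRel).mul ((conGen SylvesterRel).refl (pl p))
      ((conGen SylvesterRel).mul h1 ((conGen SylvesterRel).refl (pl s)))
  have h3 := (Con.eq (conGen SylvesterRel)).2 h2
  have e1 : p ++ [c, a] ++ v ++ [b] ++ s = p ++ (([c, a] ++ v ++ [b]) ++ s) := by
    simp [List.append_assoc]
  have e2 : p ++ [a, c] ++ v ++ [b] ++ s = p ++ (([a, c] ++ v ++ [b]) ++ s) := by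
    simp [List.append_assoc]
  rw [e1, e2]
  show (conGen SylvesterRel).mk' _ = (conGen SylvesterRel).mk' _
  rw [show pl (p ++ (([c, a] ++ v ++ [b]) ++ s)) = pl p * (pl ([c, a] ++ v ++ [b]) * pl s) from rfl,
      show pl (p ++ (([a, c] ++ v ++ [b]) ++ s)) = pl p * (pl ([a, c] ++ v ++ [b]) * pl s) from rfl]
  exact h3

/-- counting homomorphism -/
noncomputable def cntF (b : ℕ) : FreeMonoid ℕ →* Multiplicative ℕ :=
  FreeMonoid.lift (fun x => Multiplicative.ofAdd (if x = b then 1 else 0))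

lemma cntF_eval (b : ℕ) (l : List ℕ) :
    cntF b (pl l) = Multiplicative.ofAdd (l.count b) := by
  induction l with
  | nil => rfl
  | cons x t ih =>
      have : pl (x :: t) = FreeMonoid.of x * pl t := rfl
      rw [this, map_mul]
      show (Multiplicative.ofAdd (if x = b then 1 else 0)) * cntF b (pl t) = _
      rw [ih, List.count_cons]
      by_cases h : x = b <;> simp [h, ← ofAdd_add, add_comm]

lemma cntF_con : ∀ u v, (conGen SylvesterRel) u v → cntF b u = cntF b v := by
  intro u v h
  have : conGen SylvesterRel ≤ Con.ker (cntF b) := by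
    apply Con.conGen_le.2
    rintro x y ⟨a, b', c, w, _, _, hx, hy⟩
    rw [Con.ker_rel, hx, hy]
    simp only [map_mul]
    exact by ac_rfl
  exact (Con.ker_rel _).mp (this h)

noncomputable def cntQ (b : ℕ) : Q →* Multiplicative ℕ :=
  (conGen SylvesterRel).lift (cntF b) (by
    intro x y h; rw [Con.ker_rel]; exact cntF_con x y h)

lemma cntQ_pi (b : ℕ) (l : List ℕ) : cntQ b (pi l) = Multiplicative.ofAdd (l.count b) := by
  unfold cntQ pi; rw [Con.lift_mk']; exact cntF_eval b l

lemma PC.count {x y : Q} (h : PC x y) (b : ℕ) : cntQ b x = cntQ b y := by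
  obtain ⟨u, v, h1, h2⟩ := h
  rw [h1, h2, map_mul, map_mul, mul_comm]

lemma Rel.count {x y : Q} (h : Rel x y) (b : ℕ) : cntQ b x = cntQ b y := by
  induction h with
  | single h => exact h.count b
  | tail _ h ih => exact ih.trans (h.count b)

lemma oconj_count {x y : Q} (h : ∃ g h', x * g = g * y ∧ h' * x = y * h') (b : ℕ) :
    cntQ b x = cntQ b y := by
  obtain ⟨g, h', h1, _⟩ := h
  have := congrArg (cntQ b) h1
  rw [map_mul, map_mul, mul_comm (cntQ b g) (cntQ b y)] at this
  exact mul_right_cancel this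

/-- transitive closure of p-conjugacy implies o-conjugacy -/
lemma rel_oconj {x y : Q} (h : Rel x y) : ∃ g h', x * g = g * y ∧ h' * x = y * h' := by
  induction h with
  | single h =>
      obtain ⟨u, v, h1, h2⟩ := h
      exact ⟨u, v, by rw [h1, h2, mul_assoc], by rw [h1, h2, mul_assoc]⟩
  | tail _ h ih =>
      obtain ⟨u, v, h1, h2⟩ := h
      obtain ⟨g, h', hg, hh⟩ := ih
      refine ⟨g * u, v * h', ?_, ?_⟩
      · rw [← mul_assoc, hg, mul_assoc, mul_assoc, h1, h2]
        simp only [mul_assoc]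
      · rw [mul_assoc, hh, ← mul_assoc, ← mul_assoc, h1, h2]
        simp only [mul_assoc]


/-! ### word combinatorics -/

lemma pi_congr {l l' : List ℕ} (h : l = l') : pi l = pi l' := congrArg pi h

lemma exists_max : ∀ (l : List ℕ), l ≠ [] → ∃ y ∈ l, ∀ x ∈ l, x ≤ y := by
  intro l
  induction l with
  | nil => intro h; exact absurd rfl h
  | cons a t ih =>
      intro _
      rcases t.eq_nil_or_concat' with rfl | ht
      · exact ⟨a, List.mem_singleton_self a, by simp⟩
      · have htne : t ≠ [] := by rcases ht with ⟨_, _, rfl⟩; simp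
        obtain ⟨y, hy, hmax⟩ := ih htne
        rcases le_or_gt a y with hay | hya
        · exact ⟨y, List.mem_cons_of_mem a hy, by
            intro x hx
            rcases List.mem_cons.1 hx with rfl | hx
            · exact hay
            · exact hmax x hx⟩
        · exact ⟨a, List.mem_cons_self (a := a) (l := t), by
            intro x hx
            rcases List.mem_cons.1 hx with rfl | hx
            · exact le_refl x
            · exact (hmax x hx).trans hya.le⟩

/-- move a single letter `a` to the right across a block of `c`s, given a witness
somewhere to the right -/
lemma across_eq (c a : ℕ) : ∀ (M : ℕ) (q : List ℕ), (∃ b ∈ q, a ≤ b ∧ b < c) →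
    pi ([a] ++ List.replicate M c ++ q) = pi (List.replicate M c ++ [a] ++ q) := by
  intro M
  induction M with
  | zero => intro q _; rfl
  | succ M ih =>
      intro q hq
      obtain ⟨b, hbq, hab, hbc⟩ := hq
      obtain ⟨q₁, q₂, rfl⟩ := List.append_of_mem hbq
      have step : pi ([a, c] ++ (List.replicate M c ++ q₁ ++ [b] ++ q₂))
          = pi ([c, a] ++ (List.replicate M c ++ q₁ ++ [b] ++ q₂)) := by
        have := swap_eq a b c hab hbc [] (List.replicate M c ++ q₁) q₂
        simpa using this.symm
      calc pi ([a] ++ List.replicate (M+1) c ++ (q₁ ++ b :: q₂))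
          = pi ([a, c] ++ (List.replicate M c ++ q₁ ++ [b] ++ q₂)) := by
            apply pi_congr; simp [List.replicate_succ]
        _ = pi ([c, a] ++ (List.replicate M c ++ q₁ ++ [b] ++ q₂)) := step
        _ = pi ([c] ++ ([a] ++ List.replicate M c ++ (q₁ ++ b :: q₂))) := by
            apply pi_congr; simp
        _ = pi ([c] ++ (List.replicate M c ++ [a] ++ (q₁ ++ b :: q₂))) := by
            rw [pi_append [c] ([a] ++ List.replicate M c ++ (q₁ ++ b :: q₂)),
              pi_append [c] (List.replicate M c ++ [a] ++ (q₁ ++ b :: q₂)),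
              ih (q₁ ++ b :: q₂) ⟨b, by simp, hab, hbc⟩]
        _ = pi (List.replicate (M+1) c ++ [a] ++ (q₁ ++ b :: q₂)) := by
            apply pi_congr; simp [List.replicate_succ]

/-- move a block of `c`s left across a word `v₁`, all of whose letters have witnesses in `X` -/
lemma crossL (c M : ℕ) : ∀ (v₁ X v₂ : List ℕ),
    (∀ a ∈ v₁, ∃ b ∈ X, a ≤ b ∧ b < c) →
    Rel (pi (X ++ v₁ ++ List.replicate M c ++ v₂))
        (pi (X ++ List.replicate M c ++ v₁ ++ v₂)) := by
  intro v₁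
  induction v₁ using List.reverseRecOn with
  | nil => intro X v₂ _; exact Rel.of_eq (pi_congr (by simp))
  | append_singleton w a ihw =>
      intro X v₂ hwit
      have ha : ∃ b ∈ X, a ≤ b ∧ b < c := hwit a (by simp)
      have hw : ∀ x ∈ w, ∃ b ∈ X, x ≤ b ∧ b < c := fun x hx => hwit x (by simp [hx])
      obtain ⟨b, hbX, hab, hbc⟩ := ha
      -- step 1 : rotate
      have r1 : Rel (pi (X ++ (w ++ [a]) ++ List.replicate M c ++ v₂))
          (pi (([a] ++ List.replicate M c ++ v₂) ++ (X ++ w))) := by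
        have := rel_rot (X ++ w) ([a] ++ List.replicate M c ++ v₂)
        refine Rel.trans (Rel.of_eq (pi_congr ?_)) this
        simp
      -- step 2 : equality moving a across the block
      have r2 : pi (([a] ++ List.replicate M c ++ v₂) ++ (X ++ w))
          = pi ((List.replicate M c ++ [a] ++ v₂) ++ (X ++ w)) := by
        have := across_eq c a M (v₂ ++ (X ++ w)) ⟨b, by simp [hbX], hab, hbc⟩
        calc pi (([a] ++ List.replicate M c ++ v₂) ++ (X ++ w))
            = pi ([a] ++ List.replicate M c ++ (v₂ ++ (X ++ w))) := pi_congr (by simp)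
          _ = pi (List.replicate M c ++ [a] ++ (v₂ ++ (X ++ w))) := this
          _ = pi ((List.replicate M c ++ [a] ++ v₂) ++ (X ++ w)) := pi_congr (by simp)
      -- step 3 : rotate back
      have r3 : Rel (pi ((List.replicate M c ++ [a] ++ v₂) ++ (X ++ w)))
          (pi (X ++ w ++ List.replicate M c ++ ([a] ++ v₂))) := by
        have := rel_rot (List.replicate M c ++ [a] ++ v₂) (X ++ w)
        refine Rel.trans this (Rel.of_eq (pi_congr ?_))
        simp
      -- step 4 : induction
      have r4 : Rel (pi (X ++ w ++ List.replicate M c ++ ([a] ++ v₂)))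
          (pi (X ++ List.replicate M c ++ w ++ ([a] ++ v₂))) := ihw X ([a] ++ v₂) hw
      refine ((r1.trans (Rel.of_eq r2)).trans r3).trans (r4.trans (Rel.of_eq (pi_congr ?_)))
      simp

/-- key lifting lemma at word level -/
lemma liftc_word (c M : ℕ) (u v : List ℕ) (hu : ∀ a ∈ u, a < c) (hv : ∀ a ∈ v, a < c) :
    Rel (pi (u ++ v ++ List.replicate M c)) (pi (v ++ u ++ List.replicate M c)) := by
  rcases eq_or_ne u [] with rfl | hune
  · exact Rel.of_eq (pi_congr (by simp))
  rcases eq_or_ne v [] with rfl | hvne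
  · exact Rel.of_eq (pi_congr (by simp))
  obtain ⟨y, hy, hymax⟩ := exists_max (u ++ v) (by simp [hune])
  rcases List.mem_append.1 hy with hyu | hyv
  · -- witness in u : move block left across v, then rotate
    have h1 : Rel (pi (u ++ v ++ List.replicate M c ++ []))
        (pi (u ++ List.replicate M c ++ v ++ [])) :=
      crossL c M v u [] (fun a ha => ⟨y, hyu, hymax a (by simp [ha]), hu y hyu⟩)
    have h2 : Rel (pi ((u ++ List.replicate M c) ++ v))
        (pi (v ++ (u ++ List.replicate M c))) := rel_rot _ _
    refine Rel.trans (Rel.of_eq (pi_congr (by simp))) (Rel.trans h1 ?_)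
    refine Rel.trans (Rel.of_eq (pi_congr (by simp))) (Rel.trans h2 ?_)
    exact Rel.of_eq (pi_congr (by simp))
  · -- witness in v : rotate first, then move block left across u
    have h1 : Rel (pi (u ++ (v ++ List.replicate M c)))
        (pi ((v ++ List.replicate M c) ++ u)) := rel_rot _ _
    have h2 : Rel (pi (v ++ u ++ List.replicate M c ++ []))
        (pi (v ++ List.replicate M c ++ u ++ [])) :=
      crossL c M u v [] (fun a ha => ⟨y, hyv, hymax a (by simp [ha]), hv y hyv⟩)
    refine Rel.trans (Rel.of_eq (pi_congr (by simp))) (Rel.trans h1 ?_)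
    refine Rel.symm ?_
    refine Rel.trans (Rel.of_eq (pi_congr (by simp))) (Rel.trans h2 ?_)
    exact Rel.of_eq (pi_congr (by simp))


/-- cyclic hop: swap an adjacent pair (c,x) with a witness in the prefix -/
lemma hop_cyc (c x : ℕ) (p q : List ℕ) (hb : ∃ b ∈ p, x ≤ b ∧ b < c) :
    Rel (pi (p ++ [c, x] ++ q)) (pi (p ++ [x, c] ++ q)) := by
  obtain ⟨b, hbp, hxb, hbc⟩ := hb
  obtain ⟨p₁, p₂, rfl⟩ := List.append_of_mem hbp
  have r1 : Rel (pi ((p₁ ++ b :: p₂) ++ [c, x] ++ q))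
      (pi (([c, x] ++ q) ++ (p₁ ++ b :: p₂))) := by
    refine Rel.trans (Rel.of_eq (pi_congr ?_)) (rel_rot (p₁ ++ b :: p₂) ([c, x] ++ q))
    simp
  have r2 : pi (([c, x] ++ q) ++ (p₁ ++ b :: p₂))
      = pi (([x, c] ++ q) ++ (p₁ ++ b :: p₂)) := by
    have := swap_eq x b c hxb hbc [] (q ++ p₁) p₂
    calc pi (([c, x] ++ q) ++ (p₁ ++ b :: p₂))
        = pi ([] ++ [c, x] ++ (q ++ p₁) ++ [b] ++ p₂) := pi_congr (by simp)
      _ = pi ([] ++ [x, c] ++ (q ++ p₁) ++ [b] ++ p₂) := this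
      _ = pi (([x, c] ++ q) ++ (p₁ ++ b :: p₂)) := pi_congr (by simp)
  have r3 : Rel (pi (([x, c] ++ q) ++ (p₁ ++ b :: p₂)))
      (pi ((p₁ ++ b :: p₂) ++ [x, c] ++ q)) := by
    refine Rel.trans (rel_rot ([x, c] ++ q) (p₁ ++ b :: p₂)) (Rel.of_eq (pi_congr ?_))
    simp
  exact (r1.trans (Rel.of_eq r2)).trans r3

/-- number of letters different from c -/
def nc (c : ℕ) (l : List ℕ) : ℕ := l.countP (fun x => x != c)

/-- number of inversions : pairs (c, non-c) in this order -/
def inv (c : ℕ) : List ℕ → ℕ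
  | [] => 0
  | x :: t => (if x = c then nc c t else 0) + inv c t

lemma nc_nil (c : ℕ) : nc c [] = 0 := rfl

lemma inv_nil (c : ℕ) : inv c [] = 0 := rfl

lemma inv_cons (c x : ℕ) (t : List ℕ) :
    inv c (x :: t) = (if x = c then nc c t else 0) + inv c t := rfl

lemma nc_append (c : ℕ) (a b' : List ℕ) : nc c (a ++ b') = nc c a + nc c b' := by
  simp [nc, List.countP_append]

lemma nc_cons (c x : ℕ) (t : List ℕ) :
    nc c (x :: t) = (if x = c then 0 else 1) + nc c t := by
  simp only [nc, List.countP_cons]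
  by_cases h : x = c <;> simp [h, add_comm]

lemma inv_append (c : ℕ) : ∀ (a b' : List ℕ),
    inv c (a ++ b') = inv c a + inv c b' + (a.count c) * nc c b' := by
  intro a
  induction a with
  | nil => intro b'; simp [inv_nil]
  | cons x t ih =>
      intro b'
      rw [List.cons_append, inv_cons, inv_cons, ih b', nc_append, List.count_cons]
      by_cases h : x = c <;> simp [h] <;> ring
lemma nc_eq_zero (c : ℕ) : ∀ {l : List ℕ}, nc c l = 0 → l = List.replicate l.length c := by
  intro l
  induction l with
  | nil => simp
  | cons x t ih =>
      intro h
      rw [nc_cons] at h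
      by_cases hx : x = c
      · rw [if_pos hx, zero_add] at h
        subst hx
        conv_lhs => rw [ih h]
        simp [List.replicate_succ]
      · rw [if_neg hx] at h
        omega

lemma inv_zero_struct (c : ℕ) : ∀ (l : List ℕ), inv c l = 0 →
    ∃ Z m, l = Z ++ List.replicate m c ∧ c ∉ Z := by
  intro l
  induction l with
  | nil => intro _; exact ⟨[], 0, by simp, by simp⟩
  | cons x t ih =>
      intro h
      rw [inv_cons] at h
      by_cases hx : x = c
      · rw [if_pos hx] at h
        have h1 : nc c t = 0 := by omega
        have h2 := nc_eq_zero c h1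
        refine ⟨[], t.length + 1, ?_, by simp⟩
        rw [hx, List.nil_append, List.replicate_succ, ← h2]
      · rw [if_neg hx] at h
        obtain ⟨Z, m, rfl, hcZ⟩ := ih (by omega)
        refine ⟨x :: Z, m, by simp, ?_⟩
        intro hmem
        rcases List.mem_cons.1 hmem with h' | h'
        · exact hx h'.symm
        · exact hcZ h'

lemma inv_pos_decomp (c : ℕ) : ∀ (l : List ℕ), 0 < inv c l →
    ∃ p x q, l = p ++ [c, x] ++ q ∧ x ≠ c := by
  intro l
  induction l with
  | nil => intro h; rw [inv_nil] at h; omega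
  | cons z t ih =>
      intro h
      by_cases hz : z = c
      · rcases t with _ | ⟨x, t'⟩
        · exfalso; rw [inv_cons, inv_nil, nc_nil] at h; simp at h
        · by_cases hx : x = c
          · have e1 : inv c (z :: x :: t') = nc c (x :: t') + inv c (x :: t') := by
              rw [inv_cons, if_pos hz]
            have e3 : nc c (x :: t') = nc c t' := by rw [nc_cons, if_pos hx, zero_add]
            have e2 : inv c (x :: t') = nc c t' + inv c t' := by
              rw [inv_cons, if_pos hx]
            have ht : 0 < inv c (x :: t') := by omega
            obtain ⟨p, x', q, heq, hx'⟩ := ih ht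
            exact ⟨z :: p, x', q, by simp [heq], hx'⟩
          · exact ⟨[], x, t', by simp [hz], hx⟩
      · have ht : 0 < inv c t := by
          rw [inv_cons, if_neg hz] at h; omega
        obtain ⟨p, x', q, heq, hx'⟩ := ih ht
        exact ⟨z :: p, x', q, by simp [heq], hx'⟩

lemma inv_hop (c x : ℕ) (p q : List ℕ) (hx : x ≠ c) :
    inv c (p ++ [x, c] ++ q) + 1 = inv c (p ++ [c, x] ++ q) := by
  have e1 := inv_append c (p ++ [x, c]) q
  have e2 := inv_append c (p ++ [c, x]) q
  have e3 := inv_append c p [x, c]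
  have e4 := inv_append c p [c, x]
  have h5 : inv c [x, c] = 0 := by
    rw [inv_cons, inv_cons, inv_nil, nc_nil, if_neg hx]; simp
  have h6 : inv c [c, x] = 1 := by
    rw [inv_cons, inv_cons, inv_nil, nc_nil, nc_cons, if_pos rfl, if_neg hx, nc_nil]
    simp
  have h7 : (p ++ [x, c]).count c = (p ++ [c, x]).count c := by
    simp [List.count_append, List.count_cons]
    omega
  have h9 : nc c [x, c] = nc c [c, x] := by
    rw [nc_cons, nc_cons, nc_cons, nc_cons, nc_nil, if_neg hx, if_pos rfl]
    try omega
  have h10 : (p ++ [x, c]).count c * nc c q = (p ++ [c, x]).count c * nc c q := by rw [h7]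
  have h11 : p.count c * nc c [x, c] = p.count c * nc c [c, x] := by rw [h9]
  omega

/-- gathering all copies of the maximal letter at the end -/
lemma gather (c y : ℕ) (hyc : y < c) : ∀ (k : ℕ) (t : List ℕ), inv c (y :: t) ≤ k →
    (∀ x ∈ y :: t, x = c ∨ x ≤ y) →
    ∃ Z m, c ∉ Z ∧ (y :: t).Perm (Z ++ List.replicate m c) ∧
      Rel (pi (y :: t)) (pi (Z ++ List.replicate m c)) := by
  intro k
  induction k with
  | zero =>
      intro t hk _
      obtain ⟨Z, m, heq, hcZ⟩ := inv_zero_struct c (y :: t) (by omega)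
      exact ⟨Z, m, hcZ, heq ▸ List.Perm.refl _, Rel.of_eq (pi_congr heq)⟩
  | succ k ih =>
      intro t hk hmem
      rcases Nat.eq_zero_or_pos (inv c (y :: t)) with h0 | hpos
      · obtain ⟨Z, m, heq, hcZ⟩ := inv_zero_struct c (y :: t) h0
        exact ⟨Z, m, hcZ, heq ▸ List.Perm.refl _, Rel.of_eq (pi_congr heq)⟩
      · obtain ⟨p, x, q, heq, hxc⟩ := inv_pos_decomp c (y :: t) hpos
        rcases p with _ | ⟨z, p'⟩
        · exfalso
          simp only [List.nil_append, List.cons_append, List.cons.injEq] at heq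
          exact hyc.ne heq.1
        · simp only [List.cons_append, List.cons.injEq] at heq
          obtain ⟨hyz, ht⟩ := heq
          subst hyz
          -- x ≤ y
          have hxy : x ≤ y := by
            have hxmem : x ∈ y :: t := by
              rw [ht]; simp
            rcases hmem x hxmem with h' | h'
            · exact absurd h' hxc
            · exact h'
          have hop : Rel (pi ((y :: p') ++ [c, x] ++ q)) (pi ((y :: p') ++ [x, c] ++ q)) :=
            hop_cyc c x (y :: p') q ⟨y, by simp, hxy, hyc⟩
          -- permutation between old and new word
          have hperm : (y :: t).Perm ((y :: p') ++ [x, c] ++ q) := by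
            rw [ht]
            show ((y :: p') ++ [c, x] ++ q).Perm _
            refine List.Perm.append ?_ (List.Perm.refl q)
            exact List.Perm.append_left (y :: p') (List.Perm.swap x c [])
          -- inv decreased
          have hshape2 : (y :: p') ++ [c, x] ++ q = y :: (p' ++ [c, x] ++ q) := by simp
          have hinv : inv c ((y :: p') ++ [x, c] ++ q) ≤ k := by
            have := inv_hop c x (y :: p') q hxc
            rw [hshape2, ← ht] at this
            omega
          have hmem' : ∀ x' ∈ y :: (p' ++ [x, c] ++ q), x' = c ∨ x' ≤ y := by
            intro x' hx'
            apply hmem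
            exact (hperm.mem_iff).2 (by simpa using hx')
          have hshape : (y :: p') ++ [x, c] ++ q = y :: (p' ++ [x, c] ++ q) := by simp
          obtain ⟨Z, m, hcZ, hperm2, hrel⟩ := ih (p' ++ [x, c] ++ q) (by rw [← hshape]; exact hinv) hmem'
          refine ⟨Z, m, hcZ, ?_, ?_⟩
          · exact (hperm.trans (by rw [hshape])).trans hperm2
          · refine Rel.trans (Rel.of_eq (pi_congr
              (show y :: t = (y :: p') ++ [c, x] ++ q by rw [ht]; simp))) (Rel.trans hop ?_)
            exact Rel.trans (Rel.of_eq (pi_congr hshape)) hrel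


lemma pi_toList (w : FreeMonoid ℕ) : pi (FreeMonoid.toList w) = (conGen SylvesterRel).mk' w := by
  unfold pi pl; rw [FreeMonoid.ofList_toList]

lemma cntQ_one_iff (b : ℕ) (l : List ℕ) : cntQ b (pi l) = 1 ↔ l.count b = 0 := by
  rw [cntQ_pi]
  constructor
  · intro h
    have := Multiplicative.ofAdd.injective (h.trans (ofAdd_zero).symm)
    exact this
  · intro h; rw [h]; exact ofAdd_zero

lemma lift_step (c M : ℕ) {x y : Q} (h : PC x y) (hx : ∀ b, c ≤ b → cntQ b x = 1) :
    Rel (x * pi (List.replicate M c)) (y * pi (List.replicate M c)) := by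
  obtain ⟨u, v, h1, h2⟩ := h
  obtain ⟨uf, hu⟩ := Con.mk'_surjective (c := conGen SylvesterRel) u
  obtain ⟨vf, hv⟩ := Con.mk'_surjective (c := conGen SylvesterRel) v
  have hpiu : pi (FreeMonoid.toList uf) = u := by rw [pi_toList, hu]
  have hpiv : pi (FreeMonoid.toList vf) = v := by rw [pi_toList, hv]
  -- letters of the representatives are < c
  have key : ∀ (l l' : List ℕ), pi l * pi l' = x → ∀ a ∈ l, a < c := by
    intro l l' hll a ha
    by_contra hac
    have hca : c ≤ a := le_of_not_gt hac
    have h1' := hx a hca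
    rw [← hll, map_mul, cntQ_pi, cntQ_pi, ← ofAdd_add] at h1'
    have := Multiplicative.ofAdd.injective (h1'.trans (ofAdd_zero).symm)
    have hcount : 0 < l.count a := List.count_pos_iff.2 ha
    omega
  have hxuv : pi (FreeMonoid.toList uf) * pi (FreeMonoid.toList vf) = x := by
    rw [hpiu, hpiv, h1]
  have hu' : ∀ a ∈ FreeMonoid.toList uf, a < c := key _ _ hxuv
  have hv' : ∀ a ∈ FreeMonoid.toList vf, a < c := by
    intro a ha
    by_contra hac
    have hca : c ≤ a := le_of_not_gt hac
    have h1' := hx a hca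
    rw [← hxuv, map_mul, cntQ_pi, cntQ_pi, ← ofAdd_add] at h1'
    have := Multiplicative.ofAdd.injective (h1'.trans (ofAdd_zero).symm)
    have hcount : 0 < (FreeMonoid.toList vf).count a := List.count_pos_iff.2 ha
    omega
  have hrel := liftc_word c M (FreeMonoid.toList uf) (FreeMonoid.toList vf) hu' hv'
  have e1 : pi (FreeMonoid.toList uf ++ FreeMonoid.toList vf ++ List.replicate M c)
      = x * pi (List.replicate M c) := by
    rw [pi_append, pi_append, hpiu, hpiv, h1]
  have e2 : pi (FreeMonoid.toList vf ++ FreeMonoid.toList uf ++ List.replicate M c)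
      = y * pi (List.replicate M c) := by
    rw [pi_append, pi_append, hpiu, hpiv, h2]
  exact (Rel.of_eq e1.symm).trans (hrel.trans (Rel.of_eq e2))

lemma lift_rel (c M : ℕ) : ∀ {x y : Q}, Relation.TransGen PC x y →
    (∀ b, c ≤ b → cntQ b x = 1) →
    Rel (x * pi (List.replicate M c)) (y * pi (List.replicate M c)) := by
  intro x y h
  induction h with
  | single h' => intro hx; exact lift_step c M h' hx
  | tail hxz h' ih =>
      intro hx
      refine (ih hx).trans (lift_step c M h' ?_)
      intro b hb
      have : Rel _ _ := hxz
      rw [← this.count b]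
      exact hx b hb

/-- gathering, packaged -/
lemma reduce (cmax : ℕ) (W : List ℕ) (hmax : ∀ x ∈ W, x ≤ cmax)
    (hne : ∃ x ∈ W, x ≠ cmax) :
    ∃ Z m, cmax ∉ Z ∧ W.Perm (Z ++ List.replicate m cmax) ∧
      Rel (pi W) (pi (Z ++ List.replicate m cmax)) := by
  obtain ⟨y₀, hy₀W, hy₀c⟩ := hne
  have hFmem : y₀ ∈ W.filter (fun x => x != cmax) :=
    List.mem_filter.2 ⟨hy₀W, by simp [hy₀c]⟩
  obtain ⟨y, hyF, hymaxF⟩ := exists_max _ (List.ne_nil_of_mem hFmem)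
  have hyW : y ∈ W := (List.mem_filter.1 hyF).1
  have hyc : y ≠ cmax := by simpa using (List.mem_filter.1 hyF).2
  have hylt : y < cmax := lt_of_le_of_ne (hmax y hyW) hyc
  have hwitness : ∀ x ∈ W, x ≠ cmax → x ≤ y := fun x hx hxc =>
    hymaxF x (List.mem_filter.2 ⟨hx, by simp [hxc]⟩)
  obtain ⟨P, S, rfl⟩ := List.append_of_mem hyW
  have hrot : Rel (pi (P ++ y :: S)) (pi (y :: (S ++ P))) := by
    refine (rel_rot P (y :: S)).trans (Rel.of_eq (pi_congr ?_))
    simp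
  have hVperm : (P ++ y :: S).Perm (y :: (S ++ P)) := by
    have h1 : (P ++ (y :: S)).Perm ((y :: S) ++ P) := List.perm_append_comm
    have h2 : (y :: S) ++ P = y :: (S ++ P) := by simp
    rw [h2] at h1; exact h1
  have hmemV : ∀ x ∈ y :: (S ++ P), x = cmax ∨ x ≤ y := by
    intro x hx
    have hxW : x ∈ P ++ y :: S := hVperm.mem_iff.2 hx
    by_cases hxc : x = cmax
    · exact Or.inl hxc
    · exact Or.inr (hwitness x hxW hxc)
  obtain ⟨Z, m, hcZ, hpermZ, hrelZ⟩ :=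
    gather cmax y hylt (inv cmax (y :: (S ++ P))) (S ++ P) le_rfl hmemV
  exact ⟨Z, m, hcZ, hVperm.trans hpermZ, hrot.trans hrelZ⟩

lemma main : ∀ (n : ℕ) (W W' : List ℕ), W.length ≤ n →
    (∀ b, W.count b = W'.count b) → Rel (pi W) (pi W') := by
  intro n
  induction n with
  | zero =>
      intro W W' hl hc
      have hperm : W.Perm W' := List.perm_iff_count.mpr hc
      have hW : W = [] := List.length_eq_zero_iff.mp (Nat.le_zero.mp hl)
      have hW' : W' = [] := by
        have := hperm.length_eq
        rw [hW] at this
        exact List.length_eq_zero_iff.mp this.symm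
      exact Rel.of_eq (pi_congr (hW.trans hW'.symm))
  | succ n ih =>
      intro W W' hl hc
      have hperm : W.Perm W' := List.perm_iff_count.mpr hc
      rcases eq_or_ne W [] with rfl | hWne
      · have hW' : W' = [] := by
          have := hperm.length_eq
          simpa using this.symm
        exact Rel.of_eq (pi_congr hW'.symm)
      obtain ⟨cmax, hcW, hcmax⟩ := exists_max W hWne
      by_cases hall : ∀ x ∈ W, x = cmax
      · have h1 : W = List.replicate W.length cmax :=
          List.eq_replicate_of_mem hall
        have hall' : ∀ x ∈ W', x = cmax := fun x hx => hall x (hperm.mem_iff.2 hx)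
        have h2 : W' = List.replicate W'.length cmax :=
          List.eq_replicate_of_mem hall'
        refine Rel.of_eq (pi_congr ?_)
        rw [h1, h2, hperm.length_eq]
      · push_neg at hall
        obtain ⟨Z, m, hcZ, hpermZ, hrelZ⟩ := reduce cmax W hcmax hall
        -- W' facts
        have hmax' : ∀ x ∈ W', x ≤ cmax := fun x hx => hcmax x (hperm.mem_iff.2 hx)
        have hne' : ∃ x ∈ W', x ≠ cmax := by
          obtain ⟨y₀, hy₀, hy₀c⟩ := hall
          exact ⟨y₀, hperm.mem_iff.1 hy₀, hy₀c⟩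
        obtain ⟨Z', m', hcZ', hpermZ', hrelZ'⟩ := reduce cmax W' hmax' hne'
        -- m = m'
        have hcount : ∀ b, (Z ++ List.replicate m cmax).count b
            = (Z' ++ List.replicate m' cmax).count b := by
          intro b
          rw [← hpermZ.count_eq, ← hpermZ'.count_eq, hc]
        have hm : m = m' := by
          have := hcount cmax
          rw [List.count_append, List.count_append, List.count_eq_zero.2 hcZ,
            List.count_eq_zero.2 hcZ', List.count_replicate_self,
            List.count_replicate_self] at this
          omega
        -- counts of Z and Z' agree
        have hcZZ' : ∀ b, Z.count b = Z'.count b := by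
          intro b
          by_cases hbc : b = cmax
          · rw [hbc, List.count_eq_zero.2 hcZ, List.count_eq_zero.2 hcZ']
          · have := hcount b
            have hrep : (List.replicate m cmax).count b = 0 :=
              List.count_eq_zero.2 (fun hmem => hbc (List.eq_of_mem_replicate hmem))
            have hrep' : (List.replicate m' cmax).count b = 0 :=
              List.count_eq_zero.2 (fun hmem => hbc (List.eq_of_mem_replicate hmem))
            rw [List.count_append, List.count_append, hrep, hrep'] at this
            omega
        -- lengths
        have hmpos : 1 ≤ m := by
          have h0 : 0 < W.count cmax := List.count_pos_iff.2 hcW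
          have : W.count cmax = m := by
            rw [hpermZ.count_eq, List.count_append, List.count_eq_zero.2 hcZ,
              List.count_replicate_self]
            omega
          omega
        have hlen : Z.length ≤ n := by
          have := hpermZ.length_eq
          rw [List.length_append, List.length_replicate] at this
          omega
        -- induction
        have hZZ' : Rel (pi Z) (pi Z') := ih Z Z' hlen hcZZ'
        -- lift
        have hsmall : ∀ b, cmax ≤ b → cntQ b (pi Z) = 1 := by
          intro b hb
          rw [cntQ_one_iff]
          rw [List.count_eq_zero]
          intro hbZ
          have hbW : b ∈ W := hpermZ.symm.mem_iff.1 (List.mem_append.2 (Or.inl hbZ))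
          have hble := hcmax b hbW
          have : b = cmax := le_antisymm hble hb
          exact hcZ (this ▸ hbZ)
        have hlift := lift_rel cmax m hZZ' hsmall
        refine hrelZ.trans ?_
        refine (Rel.of_eq (pi_append Z (List.replicate m cmax))).trans ?_
        refine hlift.trans ?_
        rw [hm]
        refine (Rel.of_eq (pi_append Z' (List.replicate m' cmax)).symm).trans ?_
        exact hrelZ'.symm

end SylvAux

theorem sylvester_oconj_iff_content :
    (∀ w w' : FreeMonoid ℕ,
      ((∃ g h : (conGen SylvesterRel).Quotient,
          (conGen SylvesterRel).mk' w * g = g * (conGen SylvesterRel).mk' w' ∧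
          h * (conGen SylvesterRel).mk' w = (conGen SylvesterRel).mk' w' * h) ↔
        ∀ a : ℕ, w.toList.count a = w'.toList.count a)) ∧
    (∀ x y : (conGen SylvesterRel).Quotient,
      (∃ g h, x * g = g * y ∧ h * x = y * h) ↔
        Relation.TransGen (fun x y => ∃ u v, x = u * v ∧ y = v * u) x y) := by
  constructor
  · intro w w'
    constructor
    · intro h a
      have hcnt : SylvAux.cntQ a ((conGen SylvesterRel).mk' w)
          = SylvAux.cntQ a ((conGen SylvesterRel).mk' w') := SylvAux.oconj_count h a
      rw [← SylvAux.pi_toList, ← SylvAux.pi_toList, SylvAux.cntQ_pi, SylvAux.cntQ_pi] at hcnt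
      exact Multiplicative.ofAdd.injective hcnt
    · intro h
      have hrel := SylvAux.main (FreeMonoid.toList w).length
        (FreeMonoid.toList w) (FreeMonoid.toList w') le_rfl h
      rw [SylvAux.pi_toList, SylvAux.pi_toList] at hrel
      exact SylvAux.rel_oconj hrel
  · intro x y
    constructor
    · intro h
      obtain ⟨w, rfl⟩ := Con.mk'_surjective (c := conGen SylvesterRel) x
      obtain ⟨w', rfl⟩ := Con.mk'_surjective (c := conGen SylvesterRel) y
      have hcnts : ∀ a, (FreeMonoid.toList w).count a = (FreeMonoid.toList w').count a := by
        intro a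
        have hcnt : SylvAux.cntQ a ((conGen SylvesterRel).mk' w)
            = SylvAux.cntQ a ((conGen SylvesterRel).mk' w') := SylvAux.oconj_count h a
        rw [← SylvAux.pi_toList, ← SylvAux.pi_toList, SylvAux.cntQ_pi, SylvAux.cntQ_pi] at hcnt
        exact Multiplicative.ofAdd.injective hcnt
      have hrel := SylvAux.main (FreeMonoid.toList w).length
        (FreeMonoid.toList w) (FreeMonoid.toList w') le_rfl hcnts
      rw [SylvAux.pi_toList, SylvAux.pi_toList] at hrel
      exact hrel
    · intro h
      exact SylvAux.rel_oconj h
end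

section
/- In the sylvester monoid, the defining relation cavb = acvb (for a ≤ b < c and any word v) holds; consequently for any letters a ≤ b < c and word v, the words cavb and acvb insert to the same binary search tree. -/
inductive BTree (α : Type*) where
  | leaf : BTree α
  | node : BTree α → α → BTree α → BTree α

variable {α : Type*}

/-- Insertion of a letter into a (right strict) binary search tree. -/
def BTree.insert [LinearOrder α] (a : α) : BTree α → BTree α
  | .leaf => .node .leaf a .leaf
  | .node l x r =>
      if a ≤ x then .node (BTree.insert a l) x r else .node l x (BTree.insert a r)

/-- `bst w` inserts the letters of `w` from right to left into the empty tree. -/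
def bst [LinearOrder α] (w : List α) : BTree α := w.foldr BTree.insert .leaf

/-- The list of labels of a tree. -/
def BTree.labels : BTree α → List α
  | .leaf => []
  | .node l x r => l.labels ++ [x] ++ r.labels

/-- Left-to-right postfix reading. -/
def BTree.lrp : BTree α → List α
  | .leaf => []
  | .node l x r => l.lrp ++ r.lrp ++ [x]

/-- A labelled binary tree is a right strict binary search tree if each
node's label is ≥ all labels in its left subtree and < all labels in its
right subtree. -/
def BTree.IsRightStrictBST [LinearOrder α] : BTree α → Prop
  | .leaf => True
  | .node l x r =>
      (∀ y ∈ l.labels, y ≤ x) ∧ (∀ y ∈ r.labels, x < y) ∧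
        l.IsRightStrictBST ∧ r.IsRightStrictBST

lemma mem_labels_insert [LinearOrder α] (a : α) (t : BTree α) (y : α) :
    y ∈ (BTree.insert a t).labels ↔ y = a ∨ y ∈ t.labels := by
  induction t with
  | leaf => simp [BTree.insert, BTree.labels]
  | node l x r ihl ihr =>
      by_cases h : a ≤ x <;>
        simp [BTree.insert, h, BTree.labels, ihl, ihr] <;> tauto

lemma insert_isBST [LinearOrder α] (a : α) (t : BTree α)
    (ht : t.IsRightStrictBST) : (BTree.insert a t).IsRightStrictBST := by
  induction t with
  | leaf => simp [BTree.insert, BTree.labels, BTree.IsRightStrictBST]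
  | node l x r ihl ihr =>
      obtain ⟨h1, h2, h3, h4⟩ := ht
      by_cases h : a ≤ x
      · simp only [BTree.insert, if_pos h]
        refine ⟨?_, h2, ihl h3, h4⟩
        intro y hy
        rcases (mem_labels_insert a l y).1 hy with rfl | hy
        · exact h
        · exact h1 y hy
      · simp only [BTree.insert, if_neg h]
        refine ⟨h1, ?_, h3, ihr h4⟩
        intro y hy
        rcases (mem_labels_insert a r y).1 hy with rfl | hy
        · exact lt_of_not_ge h
        · exact h2 y hy

lemma bst_isBST [LinearOrder α] (w : List α) : (bst w).IsRightStrictBST := by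
  induction w with
  | nil => trivial
  | cons x w ih => exact insert_isBST x _ ih

lemma mem_labels_bst [LinearOrder α] (w : List α) (y : α) (hy : y ∈ w) :
    y ∈ (bst w).labels := by
  induction w with
  | nil => simp at hy
  | cons x w ih =>
      simp only [List.mem_cons] at hy
      rcases hy with rfl | hy
      · exact (mem_labels_insert y _ y).2 (Or.inl rfl)
      · exact (mem_labels_insert x _ y).2 (Or.inr (ih hy))

lemma insert_comm_of_between [LinearOrder α] {a c : α} (t : BTree α)
    (ht : t.IsRightStrictBST) {x : α} (hx : x ∈ t.labels) (hax : a ≤ x) (hxc : x < c) :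
    BTree.insert c (BTree.insert a t) = BTree.insert a (BTree.insert c t) := by
  induction t with
  | leaf => simp [BTree.labels] at hx
  | node l y r ihl ihr =>
      obtain ⟨h1, h2, h3, h4⟩ := ht
      have hac : a < c := lt_of_le_of_lt hax hxc
      by_cases hay : a ≤ y
      · by_cases hcy : c ≤ y
        · -- both left
          have hxl : x ∈ l.labels := by
            have hxy : x < y := lt_of_lt_of_le hxc hcy
            simp [BTree.labels] at hx
            rcases hx with hx | rfl | hx
            · exact hx
            · exact absurd hxy (lt_irrefl x)
            · exact absurd (h2 x hx) (not_lt_of_gt hxy)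
          simp [BTree.insert, hay, hcy, ihl h3 hxl]
        · -- split
          simp [BTree.insert, hay, hcy]
      · -- both right
        have hcy : ¬ c ≤ y := fun h => hay (le_of_lt (lt_of_lt_of_le hac h))
        have hxr : x ∈ r.labels := by
          have hyx : y < x := lt_of_lt_of_le (lt_of_not_ge hay) hax
          simp [BTree.labels] at hx
          rcases hx with hx | rfl | hx
          · exact absurd (h1 x hx) (not_le_of_gt hyx)
          · exact absurd hyx (lt_irrefl x)
          · exact hx
        simp [BTree.insert, hay, hcy, ihr h4 hxr]

theorem sylvester_relation_bst (a b c : ℕ) (hab : a ≤ b) (hbc : b < c) (v : List ℕ) :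
    (conGen SylvesterRel) (FreeMonoid.ofList (c :: a :: v ++ [b]))
      (FreeMonoid.ofList (a :: c :: v ++ [b])) ∧
    bst (c :: a :: v ++ [b]) = bst (a :: c :: v ++ [b]) := by
  constructor
  · exact ConGen.Rel.of _ _ ⟨a, b, c, FreeMonoid.ofList v, hab, hbc, rfl, rfl⟩
  · show BTree.insert c (BTree.insert a (bst (v ++ [b])))
        = BTree.insert a (BTree.insert c (bst (v ++ [b])))
    exact insert_comm_of_between _ (bst_isBST _)
      (mem_labels_bst _ b (by simp)) hab hbc
end

section
/- For any right strict binary search tree T, inserting the letters of its left-to-right postfix reading LRP(T) from right to left recovers T; that is, BST(LRP(T)) = T. -/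
variable {α : Type*}

lemma mem_lrp_iff (T : BTree α) (y : α) : y ∈ T.lrp ↔ y ∈ T.labels := by
  induction T with
  | leaf => simp [BTree.lrp, BTree.labels]
  | node l x r ihl ihr =>
    simp [BTree.lrp, BTree.labels, ihl, ihr]; tauto

lemma foldr_insert_left [LinearOrder α] (w : List α) (l : BTree α) (x : α) (r : BTree α)
    (h : ∀ y ∈ w, y ≤ x) :
    w.foldr BTree.insert (.node l x r) = .node (w.foldr BTree.insert l) x r := by
  induction w with
  | nil => rfl
  | cons a w ih =>
    simp only [List.foldr_cons, ih (fun y hy => h y (List.mem_cons_of_mem _ hy))]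
    simp [BTree.insert, h a List.mem_cons_self]

lemma foldr_insert_right [LinearOrder α] (w : List α) (l : BTree α) (x : α) (r : BTree α)
    (h : ∀ y ∈ w, x < y) :
    w.foldr BTree.insert (.node l x r) = .node l x (w.foldr BTree.insert r) := by
  induction w with
  | nil => rfl
  | cons a w ih =>
    simp only [List.foldr_cons, ih (fun y hy => h y (List.mem_cons_of_mem _ hy))]
    simp [BTree.insert, not_le.mpr (h a List.mem_cons_self)]

theorem bst_lrp (T : BTree α) [LinearOrder α] (hT : T.IsRightStrictBST) :
    bst T.lrp = T := by
  induction T with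
  | leaf => rfl
  | node l x r ihl ihr =>
    obtain ⟨hl, hr, hbl, hbr⟩ := hT
    show (l.lrp ++ r.lrp ++ [x]).foldr BTree.insert .leaf = _
    rw [List.foldr_append, List.foldr_append]
    show (l.lrp).foldr BTree.insert ((r.lrp).foldr BTree.insert (.node .leaf x .leaf)) = _
    rw [foldr_insert_right _ _ _ _ (fun y hy => hr y ((mem_lrp_iff r y).mp hy)),
        foldr_insert_left _ _ _ _ (fun y hy => hl y ((mem_lrp_iff l y).mp hy))]
    rw [show (l.lrp).foldr BTree.insert .leaf = bst l.lrp from rfl,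
        show (r.lrp).foldr BTree.insert .leaf = bst r.lrp from rfl,
        ihl hbl, ihr hbr]
end
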